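/- Let S² be the unit sphere of ℝ³ and let g be a C¹ diffeomorphism of S² fixing a point denoted ∞. For every point z ∈ S² distinct from ∞ and from the antipode of ∞, let γ_z be the unique great circle of S² passing through ∞ and z, and let γ⁻_z (respectively γ⁺_z) be the shorter (respectively longer) arc of γ_z joining ∞ to z. Then there exists a punctured neighborhood W of ∞ in S² such that for every fixed point z of g lying in W, one has g(γ⁻_z) ∩ γ⁺_z = {z, ∞}. -/

import Mathlib

open MeasureTheory Filter Topology Set Metric

noncomputable section

attribute [local instance] Classical.propDecidable

/-- An isotopy (within homeomorphisms of `X`) from the identity to `f`,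
parametrised by `t ∈ [0,1]` (the values for `t ∉ [0,1]` are irrelevant). -/
structure HIsotopy {X : Type*} [TopologicalSpace X] (f : X ≃ₜ X) where
  F : ℝ → X ≃ₜ X
  cont : Continuous fun p : ℝ × X => F p.1 p.2
  cont_symm : Continuous fun p : ℝ × X => (F p.1).symm p.2
  zero : F 0 = Homeomorph.refl X
  one : F 1 = f

/-- The set of fixed points of a map. -/
def FixPts {X : Type*} (g : X → X) : Set X := {z | g z = z}

/-- The set of positively recurrent points of `f`. -/
def RecPlus (f : ℂ ≃ₜ ℂ) : Set ℂ :=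
  {z | ∃ n : ℕ → ℕ, StrictMono n ∧ Tendsto (fun k => (⇑f)^[n k] z) atTop (𝓝 z)}

/-- The total angular variation (number of turns around the origin, i.e. the
integral of the polar-angle form `dθ`) of a continuous path `[0,1] → ℂ ∖ {0}`,
defined via a continuous lift of the argument (junk value otherwise). -/
def angVar (γ : ℝ → ℂ) : ℝ :=
  if h : ∃ θ : ℝ → ℝ, ContinuousOn θ (Set.Icc 0 1) ∧
      ∀ t ∈ Set.Icc (0 : ℝ) 1, γ t = (‖γ t‖ : ℂ) * Complex.exp ((θ t : ℂ) * Complex.I)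
  then (h.choose 1 - h.choose 0) / (2 * Real.pi)
  else 0

/-- `Enlace_I(z,z')`: the integral of `dθ` along `t ↦ f_t(z) - f_t(z')`. -/
def Enlace {f : ℂ ≃ₜ ℂ} (I : HIsotopy f) (z z' : ℂ) : ℝ :=
  angVar fun t => I.F t z - I.F t z'

/-- `Tourne_I(z)`: the integral of `dθ` along `t ↦ f_t(z)`. -/
def Tourne {f : ℂ ≃ₜ ℂ} (I : HIsotopy f) (z : ℂ) : ℝ :=
  angVar fun t => I.F t z

/-- Property (P1): `Enlace_I` is bounded on pairs of distinct fixed points. -/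
def P1 {f : ℂ ≃ₜ ℂ} (I : HIsotopy f) : Prop :=
  ∃ M : ℝ, ∀ z ∈ FixPts ⇑f, ∀ z' ∈ FixPts ⇑f, z ≠ z' → |Enlace I z z'| ≤ M

/-- Property (P2): `Tourne_I` is constant on the fixed points in a
neighbourhood of infinity (i.e. outside some compact set). -/
def P2 {f : ℂ ≃ₜ ℂ} (I : HIsotopy f) : Prop :=
  ∃ K : Set ℂ, IsCompact K ∧
    ∀ z ∈ FixPts ⇑f \ K, ∀ z' ∈ FixPts ⇑f \ K, Tourne I z = Tourne I z'

/-- An isotopy is adapted if `Tourne_I` vanishes on the fixed points in a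
neighbourhood of infinity. -/
def Adapted {f : ℂ ≃ₜ ℂ} (I : HIsotopy f) : Prop :=
  ∃ K : Set ℂ, IsCompact K ∧ ∀ z ∈ FixPts ⇑f \ K, Tourne I z = 0

/-- The orbit of `z` has rotation number `ρ` around `z'` (with respect to the
isotopy `I`): along every strictly increasing sequence of integers `(n k)` with
`f^[n k] z → z`, the Birkhoff averages of `Enlace I · z'` converge to `ρ`. -/
def HasRot {f : ℂ ≃ₜ ℂ} (I : HIsotopy f) (z' z : ℂ) (ρ : ℝ) : Prop :=
  ∀ n : ℕ → ℕ, StrictMono n → Tendsto (fun k => (⇑f)^[n k] z) atTop (𝓝 z) →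
    Tendsto (fun k => (∑ r ∈ Finset.range (n k), Enlace I ((⇑f)^[r] z) z') / (n k : ℝ))
      atTop (𝓝 ρ)

/-- The rotation number `ρ_{z'}(z)` as a function (junk value `0` if it is
not defined). -/
def rho {f : ℂ ≃ₜ ℂ} (I : HIsotopy f) (z' z : ℂ) : ℝ :=
  if h : ∃ ρ : ℝ, HasRot I z' z ρ then h.choose else 0

/-- A free disc for `f`: an open set homeomorphic to the plane and disjoint
from its image. -/
def FreeDisc (f : ℂ ≃ₜ ℂ) (U : Set ℂ) : Prop :=
  IsOpen U ∧ Nonempty (U ≃ₜ ℂ) ∧ Disjoint (⇑f '' U) U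

/-- The first return time `τ_U(z)` to `U` (junk value `0` if the orbit never
returns). -/
def retTime (f : ℂ ≃ₜ ℂ) (U : Set ℂ) (z : ℂ) : ℕ :=
  sInf {n : ℕ | 0 < n ∧ (⇑f)^[n] z ∈ U}

/-- `γ` is a path in `U` from `x` to `y` (parametrised by `[0,1]`). -/
def IsPathIn (U : Set ℂ) (x y : ℂ) (γ : ℝ → ℂ) : Prop :=
  ContinuousOn γ (Set.Icc 0 1) ∧ (∀ t ∈ Set.Icc (0 : ℝ) 1, γ t ∈ U) ∧ γ 0 = x ∧ γ 1 = y

/-- `α_{U,z'}(z) = Σ_{0 ≤ ℓ < τ_U(z)} Enlace_I(f^ℓ(z),z') + ∫_{γ_{U,z} - z'} dθ`,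
where `γ_{U,z}` is a path in `U` joining the first return `F_U(z)` to `z`. -/
def alphaU {f : ℂ ≃ₜ ℂ} (I : HIsotopy f) (U : Set ℂ) (z' z : ℂ) : ℝ :=
  (∑ ℓ ∈ Finset.range (retTime f U z), Enlace I ((⇑f)^[ℓ] z) z') +
    if h : ∃ γ : ℝ → ℂ, IsPathIn U ((⇑f)^[retTime f U z] z) z γ
    then angVar fun t => h.choose t - z' else 0

/-- `α̂_{U,R}(z) = sup { |α_{U,z'}(z)| : z' ∈ Fix(f), ‖z'‖ ≥ R }`. -/
def alphaHat {f : ℂ ≃ₜ ℂ} (I : HIsotopy f) (U : Set ℂ) (R : ℝ) (z : ℂ) : ℝ :=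
  sSup {a : ℝ | ∃ z' ∈ FixPts ⇑f, R ≤ ‖z'‖ ∧ a = |alphaU I U z' z|}

/-- The (closed) support of a measure. -/
def measSupport {X : Type*} [TopologicalSpace X] {m : MeasurableSpace X}
    (μ : Measure X) : Set X :=
  {x | ∀ U : Set X, IsOpen U → x ∈ U → μ U ≠ 0}

/-- The standard unit sphere `S² ⊂ ℝ³`. -/
notation "𝕊²" => Metric.sphere (0 : EuclideanSpace ℝ (Fin 3)) 1

instance : Fact (Module.finrank ℝ (EuclideanSpace ℝ (Fin 3)) = 3) :=
  ⟨finrank_euclideanSpace_fin⟩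

open Manifold in
/-- `g` is a `C¹` diffeomorphism of the standard sphere. -/
def IsC1SphereDiffeo (g : 𝕊² → 𝕊²) : Prop :=
  Function.Bijective g ∧ ContMDiff (𝓡 2) (𝓡 2) 1 g ∧
    ∃ g' : 𝕊² → 𝕊², Function.LeftInverse g' g ∧ Function.RightInverse g' g ∧
      ContMDiff (𝓡 2) (𝓡 2) 1 g'

/-- `f` extends to a `C¹` diffeomorphism of `S² = ℝ² ⊔ {∞}` for some smooth
structure on `S²`: transporting the extension of `f` to the one-point
compactification through some homeomorphism with the standard sphere yields a
`C¹` diffeomorphism. -/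
def ExtendsToC1SphereDiffeo (f : ℂ ≃ₜ ℂ) : Prop :=
  ∃ φ : OnePoint ℂ ≃ₜ 𝕊², IsC1SphereDiffeo fun x => φ (OnePoint.map (⇑f) (φ.symm x))

/-- The commutator loop `t ↦ [f₁^t, f₂^t] = f₁^t ∘ f₂^t ∘ (f₁^t)⁻¹ ∘ (f₂^t)⁻¹`. -/
def commLoop {X : Type*} [TopologicalSpace X] {f₁ f₂ : X ≃ₜ X}
    (I₁ : HIsotopy f₁) (I₂ : HIsotopy f₂) (t : ℝ) : X ≃ₜ X :=
  (I₂.F t).symm.trans ((I₁.F t).symm.trans ((I₂.F t).trans (I₁.F t)))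

/-- The invariant `W(f₁,f₂)` vanishes: for isotopies from the identity to
`f₁`, `f₂`, the commutator loop is null-homotopic (rel basepoint) in the group
of homeomorphisms. -/
def WVanishes {X : Type*} [TopologicalSpace X] (f₁ f₂ : X ≃ₜ X) : Prop :=
  ∃ (I₁ : HIsotopy f₁) (I₂ : HIsotopy f₂) (H : ℝ → ℝ → X ≃ₜ X),
    Continuous (fun p : (ℝ × ℝ) × X => H p.1.1 p.1.2 p.2) ∧
    Continuous (fun p : (ℝ × ℝ) × X => (H p.1.1 p.1.2).symm p.2) ∧
    (∀ t, H 0 t = commLoop I₁ I₂ t) ∧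
    (∀ t, H 1 t = Homeomorph.refl X) ∧
    (∀ s, H s 0 = Homeomorph.refl X) ∧
    (∀ s, H s 1 = Homeomorph.refl X)

/-- The shorter great-circle arc joining `p` to `z` on the unit sphere
(for `z` neither `p` nor its antipode): the points of the sphere which are
nonnegative linear combinations of `p` and `z`. -/
def minorArcS (p z : 𝕊²) : Set 𝕊² :=
  {x | ∃ a b : ℝ, 0 ≤ a ∧ 0 ≤ b ∧
    (x : EuclideanSpace ℝ (Fin 3)) =
      a • (p : EuclideanSpace ℝ (Fin 3)) + b • (z : EuclideanSpace ℝ (Fin 3))}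

/-- The longer great-circle arc joining `p` to `z` on the unit sphere. -/
def majorArcS (p z : 𝕊²) : Set 𝕊² :=
  {x | ∃ a b : ℝ, (a ≤ 0 ∨ b ≤ 0) ∧
    (x : EuclideanSpace ℝ (Fin 3)) =
      a • (p : EuclideanSpace ℝ (Fin 3)) + b • (z : EuclideanSpace ℝ (Fin 3))}



section Stmt17Aux

open scoped RealInnerProductSpace

set_option maxHeartbeats 2000000

instance fact_sphere_two_one : Fact (Module.finrank ℝ (EuclideanSpace ℝ (Fin 3)) = 2 + 1) :=
  ⟨finrank_euclideanSpace_fin⟩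

abbrev Ethree := EuclideanSpace ℝ (Fin 3)
abbrev Etwo := EuclideanSpace ℝ (Fin 2)

theorem aux_alg1 (a b c : ℝ) (ha : 0 ≤ a) (hb : 0 ≤ b) (h : a^2+b^2+2*(a*(b*c)) = 1)
    (hc : -1 ≤ c) (hc1 : c ≤ 1) : c ≤ a + b*c := by
  have key : (a + b*c)^2 - c^2 = (1-c^2)*(1-b^2) := by nlinarith
  have hcc : (0:ℝ) ≤ 1 - c^2 := by nlinarith
  rcases le_or_gt b 1 with hb1 | hb1
  · rcases le_or_gt c 0 with hc0 | hc0
    · nlinarith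
    · have k2 : (0:ℝ) ≤ (1-c^2)*(1-b^2) := mul_nonneg hcc (by nlinarith)
      by_contra hcon
      push_neg at hcon
      have habc : 0 ≤ a + b*c := by positivity
      nlinarith [mul_pos (sub_pos.2 hcon) (show 0 < c + (a+b*c) by linarith)]
  · rcases le_or_gt c 0 with hc0 | hc0
    · have k2 : (1-c^2)*(1-b^2) ≤ 0 :=
        mul_nonpos_of_nonneg_of_nonpos hcc (by nlinarith)
      by_contra hcon
      push_neg at hcon
      nlinarith [mul_pos (sub_pos.2 hcon) (show 0 < -(a+b*c) - c by nlinarith)]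
    · nlinarith

theorem aux_alg2 (a b c : ℝ) (ha : 0 ≤ a) (hb : 0 ≤ b) (h : a^2+b^2+2*(a*(b*c)) = 1)
    (hD : 0 < 1 + (a + b*c)) : b ≤ 1 + a := by
  nlinarith [mul_nonneg ha hD.le, sq_nonneg (b - (1+a)), sq_nonneg (b + (1+a))]

theorem aux_alg3 (a b c : ℝ) (hab : a ≤ 0 ∨ b ≤ 0) (h : a^2+b^2+2*(a*(b*c)) = 1)
    (hc : -1 < c) (hc1 : c < 1) (hD : 0 < 1 + (a + b*c)) :
    b*(1+c)/(1 + (a + b*c)) ≤ 0 ∨ 1 ≤ b*(1+c)/(1 + (a + b*c)) := by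
  rcases le_or_gt b 0 with hb | hb
  · left
    apply div_nonpos_of_nonpos_of_nonneg <;> nlinarith
  · right
    rcases hab with ha | ha
    · rw [le_div_iff₀ hD]
      rcases le_or_gt (1+a) 0 with h1a | h1a
      · nlinarith
      · nlinarith [sq_nonneg (b - (1+a))]
    · linarith

theorem aux_stereo_comb (p z x : 𝕊²) (a b : ℝ)
    (hx : (x : Ethree) = a • (p:Ethree) + b • (z:Ethree)) :
    stereographic (norm_eq_of_mem_sphere (-p)) x =
      (2 * b / (1 - inner ℝ ((-p:𝕊²) : Ethree) (x:Ethree))) •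
        Submodule.orthogonalProjectionOnto (ℝ ∙ ((-p:𝕊²) : Ethree))ᗮ (z:Ethree) := by
  have hproj : Submodule.orthogonalProjectionOnto (ℝ ∙ ((-p:𝕊²) : Ethree))ᗮ (p:Ethree) = 0 := by
    have := Submodule.orthogonalProjectionOnto_orthogonalComplement_singleton_eq_zero (𝕜 := ℝ)
      (((-p : 𝕊²) : Ethree))
    rw [coe_neg_sphere, map_neg] at this
    exact neg_eq_zero.mp this
  rw [stereographic_apply, hx, map_add, _root_.map_smul, _root_.map_smul, hproj, smul_zero, zero_add,
    smul_smul]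
  congr 1
  ring

theorem aux_chart_comb (p z x : 𝕊²) (a b : ℝ)
    (hx : (x : Ethree) = a • (p:Ethree) + b • (z:Ethree)) :
    (chartAt Etwo p) x =
      (2 * b / (1 + (a + b * ⟪(p:Ethree), (z:Ethree)⟫))) •
        ((OrthonormalBasis.fromOrthogonalSpanSingleton 2
            (ne_zero_of_mem_unit_sphere (-p))).repr
          (Submodule.orthogonalProjectionOnto (ℝ ∙ ((-p:𝕊²) : Ethree))ᗮ (z:Ethree))) := by
  have hchart : (chartAt Etwo p) x =
      (OrthonormalBasis.fromOrthogonalSpanSingleton 2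
            (ne_zero_of_mem_unit_sphere (-p))).repr
        (stereographic (norm_eq_of_mem_sphere (-p)) x) := rfl
  rw [hchart, aux_stereo_comb p z x a b hx, _root_.map_smul]
  congr 2
  rw [coe_neg_sphere, inner_neg_left, hx, inner_add_right, inner_smul_right, inner_smul_right,
    real_inner_self_eq_norm_sq]
  have h1 : ‖(p:Ethree)‖ = 1 := norm_eq_of_mem_sphere p
  rw [h1]
  ring

theorem aux_comb_constraint (p z x : 𝕊²) (a b : ℝ)
    (hx : (x : Ethree) = a • (p:Ethree) + b • (z:Ethree)) :
    a^2 + b^2 + 2*(a*(b*⟪(p:Ethree), (z:Ethree)⟫)) = 1 := by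
  have h1 : ‖a • (p:Ethree) + b • (z:Ethree)‖^2 = 1 := by
    rw [← hx, norm_eq_of_mem_sphere]; norm_num
  rw [norm_add_sq_real, norm_smul, norm_smul, real_inner_smul_left, real_inner_smul_right] at h1
  rw [norm_eq_of_mem_sphere, norm_eq_of_mem_sphere] at h1
  simp only [mul_one, Real.norm_eq_abs, sq_abs] at h1
  linarith

theorem aux_inner_comb (p z x : 𝕊²) (a b : ℝ)
    (hx : (x : Ethree) = a • (p:Ethree) + b • (z:Ethree)) :
    ⟪(p:Ethree), (x:Ethree)⟫ = a + b * ⟪(p:Ethree), (z:Ethree)⟫ := by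
  rw [hx, inner_add_right, real_inner_smul_right, real_inner_smul_right,
    real_inner_self_eq_norm_sq, norm_eq_of_mem_sphere]
  ring

theorem aux_inner_lt_one (p z : 𝕊²) (h : z ≠ p) : ⟪(p:Ethree), (z:Ethree)⟫ < 1 := by
  rcases lt_or_eq_of_le (real_inner_le_norm (p:Ethree) (z:Ethree)) with h1 | h1
  · simpa [norm_eq_of_mem_sphere] using h1
  · exfalso
    apply h
    have := (inner_eq_one_iff_of_norm_eq_one (𝕜 := ℝ)
      (norm_eq_of_mem_sphere p) (norm_eq_of_mem_sphere z)).mp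
      (by rw [h1, norm_eq_of_mem_sphere, norm_eq_of_mem_sphere]; norm_num)
    exact Subtype.ext this.symm

theorem aux_inner_gt_negone (p x : 𝕊²) (h : x ≠ -p) : -1 < ⟪(p:Ethree), (x:Ethree)⟫ := by
  have key := aux_inner_lt_one (-p) x h
  rw [coe_neg_sphere, inner_neg_left] at key
  linarith

theorem aux_epsdelta {E : Type*} [NormedAddCommGroup E] [NormedSpace ℝ E]
    (G : E → E) (A : E →L[ℝ] E) (q : E) (h : HasStrictFDerivAt G A q) (ε : ℝ) (hε : 0 < ε) :
    ∃ δ > 0, ∀ x y : E, dist x q < δ → dist y q < δ →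
      ‖G x - G y - A (x - y)‖ ≤ ε * ‖x - y‖ := by
  have h2 := h.isLittleO.def hε
  rw [Metric.eventually_nhds_iff] at h2
  obtain ⟨δ, hδ, H⟩ := h2
  refine ⟨δ, hδ, fun x y hx hy => ?_⟩
  have : dist ((x, y) : E × E) (q, q) < δ := by
    rw [Prod.dist_eq]; exact max_lt hx hy
  exact H this

set_option maxHeartbeats 8000000 in
open Manifold in
theorem main_thm
    (g : 𝕊² → 𝕊²) (hsmooth : ContMDiff (𝓡 2) (𝓡 2) 1 g) (p : 𝕊²) (hp : g p = p) :
    ∃ V : Set 𝕊², IsOpen V ∧ p ∈ V ∧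
      (∀ z ∈ V, (z : EuclideanSpace ℝ (Fin 3)) ≠ -(p : EuclideanSpace ℝ (Fin 3))) ∧
      ∀ z ∈ V, z ≠ p → g z = z →
        g '' {x : 𝕊² | ∃ a b : ℝ, 0 ≤ a ∧ 0 ≤ b ∧
            (x : Ethree) = a • (p : Ethree) + b • (z : Ethree)} ∩
          {x : 𝕊² | ∃ a b : ℝ, (a ≤ 0 ∨ b ≤ 0) ∧
            (x : Ethree) = a • (p : Ethree) + b • (z : Ethree)} = {z, p} := by
  classical
  set φ := chartAt Etwo p with hφdef
  have hsrc : φ.source = {-p}ᶜ := by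
    rw [show φ = stereographic' 2 (-p) from rfl, stereographic'_source]
  have hpne : p ≠ -p := by
    intro h
    have h2 : (p:Ethree) = -(p:Ethree) := by
      conv_lhs => rw [h]
      exact coe_neg_sphere p
    have h4 : (p:Ethree) = 0 := by
      have h5 : (2:ℝ) • (p:Ethree) = 0 := by
        rw [two_smul]
        nth_rewrite 1 [h2]
        abel
      rcases smul_eq_zero.mp h5 with h6 | h6
      · norm_num at h6
      · exact h6
    have h3 : ‖(p:Ethree)‖ = 1 := norm_eq_of_mem_sphere p
    rw [h4] at h3
    simp at h3
  have hpsrc : p ∈ φ.source := by rw [hsrc]; exact hpne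
  have hφp : φ p = 0 := by
    have h := aux_chart_comb p p p 1 0 (by rw [one_smul, zero_smul, add_zero])
    rw [← hφdef] at h
    rw [h, mul_zero, zero_div, zero_smul]
  -- strict derivative of the chart representative
  set G : Etwo → Etwo := ↑φ ∘ g ∘ ↑φ.symm with hGdef
  have hstrict : HasStrictFDerivAt G (fderiv ℝ G (φ p)) (φ p) := by
    have h1 : ContMDiffAt (𝓡 2) (𝓡 2) 1 g p := hsmooth p
    rw [contMDiffAt_iff] at h1
    obtain ⟨hc, h2⟩ := h1
    rw [hp] at h2
    simp only [extChartAt, OpenPartialHomeomorph.extend, modelWithCornersSelf_partialEquiv,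
      PartialEquiv.trans_refl, OpenPartialHomeomorph.toFun_eq_coe,
      ModelWithCorners.range_eq_univ, contDiffWithinAt_univ] at h2
    exact h2.hasStrictFDerivAt one_ne_zero
  rw [hφp] at hstrict
  set A := fderiv ℝ G (0:Etwo) with hAdef
  obtain ⟨δ, hδ, hest⟩ := aux_epsdelta G A 0 hstrict (1/4) (by norm_num)
  -- continuity radius
  have hcont : Continuous g := hsmooth.continuous
  have hgpsrc : g p ∈ φ.source := by rw [hp]; exact hpsrc
  have hnhds : g ⁻¹' φ.source ∈ 𝓝 p :=
    hcont.continuousAt.preimage_mem_nhds (φ.open_source.mem_nhds hgpsrc)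
  obtain ⟨r1, hr1, hball⟩ := Metric.mem_nhds_iff.mp hnhds
  set r := min r1 1 with hrdef
  have hrpos : 0 < r := lt_min hr1 one_pos
  refine ⟨ball p r ∩ (φ.source ∩ ↑φ ⁻¹' ball (0:Etwo) δ), ?_, ?_, ?_, ?_⟩
  · exact isOpen_ball.inter (φ.isOpen_inter_preimage isOpen_ball)
  · exact ⟨mem_ball_self hrpos, hpsrc, by
      simp only [Set.mem_preimage, hφp]; exact mem_ball_self hδ⟩
  · intro z hz
    have hzsrc : z ∈ φ.source := hz.2.1
    rw [hsrc] at hzsrc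
    intro hcon
    exact hzsrc (Subtype.ext (by rw [coe_neg_sphere]; exact hcon))
  · rintro z ⟨hzball, hzsrc, hzφ⟩ hzp hgz
    set c : ℝ := ⟪(p:Ethree), (z:Ethree)⟫ with hcdef
    have hzsrc' : z ≠ -p := by rw [hsrc] at hzsrc; exact hzsrc
    have hc1 : c < 1 := aux_inner_lt_one p z hzp
    have hcm1 : -1 < c := aux_inner_gt_negone p z hzsrc'
    set ζ := φ z with hζdef
    have hζball : ζ ∈ ball (0:Etwo) δ := hzφ
    have hζnorm : ‖ζ‖ < δ := by rwa [mem_ball, dist_zero_right] at hζball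
    have hζ0 : ζ ≠ 0 := by
      intro h
      exact hzp (φ.injOn hzsrc hpsrc (by rw [← hζdef, h, hφp]))
    have hζpos : 0 < ‖ζ‖ := norm_pos_iff.2 hζ0
    set ι := (OrthonormalBasis.fromOrthogonalSpanSingleton 2
        (ne_zero_of_mem_unit_sphere (-p))).repr
      (Submodule.orthogonalProjectionOnto (ℝ ∙ ((-p:𝕊²) : Ethree))ᗮ (z:Ethree)) with hιdef
    have hφz : ζ = (2 / (1 + c)) • ι := by
      have h := aux_chart_comb p z z 0 1 (by rw [zero_smul, one_smul, zero_add])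
      rw [← hcdef, ← hιdef] at h
      rw [hζdef, h]
      congr 1
      ring
    have hdzp : dist z p < r := by rwa [mem_ball] at hzball
    ext w
    constructor
    · rintro ⟨⟨x, hxminor, rfl⟩, hwmajor⟩
      obtain ⟨a, b, ha, hb, hxab⟩ := hxminor
      have hconstr := aux_comb_constraint p z x a b hxab
      have hpx := aux_inner_comb p z x a b hxab
      have hcx : c ≤ a + b*c := aux_alg1 a b c ha hb hconstr hcm1.le hc1.le
      have hDx : (0:ℝ) < 1 + (a + b*c) := by linarith
      -- x is closer to p than z
      have hxp2 : ⟪(x:Ethree), (p:Ethree)⟫ = a + b*c := by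
        rw [real_inner_comm, hpx, ← hcdef]
      have hzp2 : ⟪(z:Ethree), (p:Ethree)⟫ = c := by
        rw [real_inner_comm, ← hcdef]
      have hdx : dist x p ≤ dist z p := by
        have h1 : dist x p ^ 2 ≤ dist z p ^ 2 := by
          rw [Subtype.dist_eq, Subtype.dist_eq, dist_eq_norm, dist_eq_norm,
            norm_sub_sq_real, norm_sub_sq_real, hxp2, hzp2]
          simp only [norm_eq_of_mem_sphere, one_pow]
          linarith
        have := Real.sqrt_le_sqrt h1
        rwa [Real.sqrt_sq dist_nonneg, Real.sqrt_sq dist_nonneg] at this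
      have hxr : dist x p < r := lt_of_le_of_lt hdx hdzp
      have hxne : x ≠ -p := by
        intro h
        rw [h] at hxr
        have h2 : dist (-p : 𝕊²) p = 2 := by
          rw [Subtype.dist_eq, coe_neg_sphere, dist_eq_norm]
          have : -(p:Ethree) - (p:Ethree) = (-2 : ℝ) • (p:Ethree) := by module
          rw [this, norm_smul, norm_eq_of_mem_sphere]
          norm_num
        have : r ≤ 1 := min_le_right _ _
        rw [h2] at hxr
        linarith
      have hxsrc : x ∈ φ.source := by rw [hsrc]; exact hxne
      have hwsrc : g x ∈ φ.source := hball (by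
        have : r ≤ r1 := min_le_left _ _
        exact mem_ball.2 (lt_of_lt_of_le hxr this))
      have hwne : g x ≠ -p := by rw [hsrc] at hwsrc; exact hwsrc
      -- chart image of x
      set s := b*(1+c)/(1+(a+b*c)) with hsdef
      have hs0 : 0 ≤ s := div_nonneg (mul_nonneg hb (by linarith)) hDx.le
      have hs1 : s ≤ 1 := by
        rw [hsdef, div_le_one hDx]
        have h3 := aux_alg2 a b c ha hb hconstr hDx
        calc b * (1 + c) = b + b * c := by ring
        _ ≤ 1 + (a + b * c) := by linarith
      have hne1 : (1 + (a + b*c)) ≠ 0 := ne_of_gt hDx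
      have hne2 : (1 + c) ≠ 0 := by linarith
      have hφx : φ x = s • ζ := by
        rw [aux_chart_comb p z x a b hxab, ← hcdef, ← hιdef, hφz, smul_smul]
        congr 1
        rw [hsdef]
        field_simp
      -- chart image of w
      obtain ⟨a', b', hab', hwab⟩ := hwmajor
      have hconstr' := aux_comb_constraint p z (g x) a' b' hwab
      have hpw := aux_inner_comb p z (g x) a' b' hwab
      have hDw : (0:ℝ) < 1 + (a' + b'*c) := by
        have := aux_inner_gt_negone p (g x) hwne
        rw [hpw, ← hcdef] at this
        linarith
      set t := b'*(1+c)/(1+(a'+b'*c)) with htdef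
      have ht := aux_alg3 a' b' c hab' hconstr' hcm1 hc1 hDw
      rw [← htdef] at ht
      have hne3 : (1 + (a' + b'*c)) ≠ 0 := ne_of_gt hDw
      have hφw : φ (g x) = t • ζ := by
        rw [aux_chart_comb p z (g x) a' b' hwab, ← hcdef, ← hιdef, hφz, smul_smul]
        congr 1
        rw [htdef]
        field_simp
      -- G facts
      have hGs : G (s • ζ) = t • ζ := by
        rw [← hφx, ← hφw, hGdef]
        show φ (g (φ.symm (φ x))) = φ (g x)
        rw [φ.left_inv hxsrc]
      have hG0 : G 0 = 0 := by
        rw [← hφp, hGdef]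
        show φ (g (φ.symm (φ p))) = φ p
        rw [φ.left_inv hpsrc, hp]
      have hGζ : G ζ = ζ := by
        rw [hζdef, hGdef]
        show φ (g (φ.symm (φ z))) = φ z
        rw [φ.left_inv hzsrc, hgz]
      -- estimates
      have hsζd : dist (s • ζ) (0:Etwo) < δ := by
        rw [dist_zero_right, norm_smul, Real.norm_eq_abs, abs_of_nonneg hs0]
        calc s * ‖ζ‖ ≤ 1 * ‖ζ‖ := mul_le_mul_of_nonneg_right hs1 (norm_nonneg _)
        _ = ‖ζ‖ := one_mul _
        _ < δ := hζnorm
      have hζd : dist ζ (0:Etwo) < δ := by rwa [dist_zero_right]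
      have h0d : dist (0:Etwo) (0:Etwo) < δ := by simpa using hδ
      have e1 := hest (s • ζ) 0 hsζd h0d
      have e2 := hest ζ 0 hζd h0d
      have e3 := hest (s • ζ) ζ hsζd hζd
      rw [hGs, hG0] at e1
      simp only [sub_zero] at e1
      rw [A.map_smul, norm_smul, Real.norm_eq_abs, abs_of_nonneg hs0] at e1
      rw [hGζ, hG0] at e2
      simp only [sub_zero] at e2
      rw [hGs, hGζ, show s • ζ - ζ = (s - 1) • ζ by rw [sub_smul, one_smul],
        A.map_smul, norm_smul, Real.norm_eq_abs, abs_of_nonpos (by linarith : s - 1 ≤ 0)] at e3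
      rcases ht with ht | ht
      · -- conclude w = p
        have k1 : ‖t • ζ - s • ζ‖ ≤ (1/2) * (s * ‖ζ‖) := by
          calc ‖t • ζ - s • ζ‖ ≤ ‖t • ζ - s • A ζ‖ + ‖s • A ζ - s • ζ‖ := by
                have := norm_sub_le_norm_sub_add_norm_sub (t • ζ) (s • A ζ) (s • ζ)
                linarith [norm_add_le (t • ζ - s • A ζ) (s • A ζ - s • ζ)]
          _ ≤ (1/4) * (s * ‖ζ‖) + s * ‖ζ - A ζ‖ := by
                have h2 : s • A ζ - s • ζ = s • (A ζ - ζ) := by rw [smul_sub]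
                rw [h2, norm_smul, Real.norm_eq_abs, abs_of_nonneg hs0,
                  norm_sub_rev (A ζ) ζ]
                exact add_le_add e1 le_rfl
          _ ≤ (1/4) * (s * ‖ζ‖) + s * ((1/4) * ‖ζ‖) :=
                add_le_add le_rfl (mul_le_mul_of_nonneg_left e2 hs0)
          _ = (1/2) * (s * ‖ζ‖) := by ring
        have k2 : (s - t) * ‖ζ‖ ≤ (1/2) * (s * ‖ζ‖) := by
          calc (s - t) * ‖ζ‖ ≤ |t - s| * ‖ζ‖ := by
                have : s - t ≤ |t - s| := by rw [abs_sub_comm]; exact le_abs_self _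
                exact mul_le_mul_of_nonneg_right this (norm_nonneg _)
          _ = ‖(t - s) • ζ‖ := by rw [norm_smul, Real.norm_eq_abs]
          _ = ‖t • ζ - s • ζ‖ := by rw [sub_smul]
          _ ≤ (1/2) * (s * ‖ζ‖) := k1
        have k3 : s * ‖ζ‖ ≤ (s - t) * ‖ζ‖ :=
          mul_le_mul_of_nonneg_right (by linarith) (norm_nonneg _)
        have k4 : s * ‖ζ‖ ≤ 0 * ‖ζ‖ := by
          rw [zero_mul]
          linarith
        have hs_eq : s = 0 :=
          le_antisymm ((mul_le_mul_iff_of_pos_right hζpos).mp k4) hs0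
        have ht_eq : t = 0 := by
          rw [hs_eq] at k2
          have k5 : (0 - t) * ‖ζ‖ ≤ 0 * ‖ζ‖ := by
            rw [zero_mul]
            linarith
          have := (mul_le_mul_iff_of_pos_right hζpos).mp k5
          linarith
        have : φ (g x) = φ p := by rw [hφw, ht_eq, zero_smul, hφp]
        have hwp : g x = p := φ.injOn hwsrc hpsrc this
        rw [hwp]
        exact Set.mem_insert_iff.mpr (Or.inr rfl)
      · -- conclude w = z
        have k1 : ‖t • ζ - ζ - (s - 1) • ζ‖ ≤ (1/2) * ((1 - s) * ‖ζ‖) := by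
          calc ‖t • ζ - ζ - (s - 1) • ζ‖
              ≤ ‖t • ζ - ζ - (s - 1) • A ζ‖ + ‖(s - 1) • A ζ - (s - 1) • ζ‖ := by
                have : t • ζ - ζ - (s - 1) • ζ =
                    (t • ζ - ζ - (s - 1) • A ζ) + ((s - 1) • A ζ - (s - 1) • ζ) := by abel
                rw [this]
                exact norm_add_le _ _
          _ ≤ (1/4) * ((1 - s) * ‖ζ‖) + (1 - s) * ‖ζ - A ζ‖ := by
                have h2 : (s - 1) • A ζ - (s - 1) • ζ = (s - 1) • (A ζ - ζ) := by rw [smul_sub]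
                have h3 : ‖(s - 1) • (A ζ - ζ)‖ = (1 - s) * ‖ζ - A ζ‖ := by
                  rw [norm_smul, Real.norm_eq_abs, abs_of_nonpos (by linarith : s - 1 ≤ 0),
                    norm_sub_rev (A ζ) ζ]
                  ring
                have h4 : ‖t • ζ - ζ - (s - 1) • A ζ‖ ≤ (1/4) * ((1 - s) * ‖ζ‖) := by
                  calc ‖t • ζ - ζ - (s - 1) • A ζ‖ ≤ 1 / 4 * (-(s - 1) * ‖ζ‖) := e3
                  _ = (1/4) * ((1 - s) * ‖ζ‖) := by ring
                rw [h2, h3]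
                exact add_le_add h4 le_rfl
          _ ≤ (1/4) * ((1 - s) * ‖ζ‖) + (1 - s) * ((1/4) * ‖ζ‖) :=
                add_le_add le_rfl (mul_le_mul_of_nonneg_left e2 (by linarith))
          _ = (1/2) * ((1 - s) * ‖ζ‖) := by ring
        have k2 : (t - s) * ‖ζ‖ ≤ (1/2) * ((1 - s) * ‖ζ‖) := by
          calc (t - s) * ‖ζ‖ = |t - s| * ‖ζ‖ := by
                rw [abs_of_nonneg (by linarith : (0:ℝ) ≤ t - s)]
          _ = ‖(t - s) • ζ‖ := by rw [norm_smul, Real.norm_eq_abs]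
          _ = ‖t • ζ - ζ - (s - 1) • ζ‖ := by
                congr 1
                rw [sub_smul, sub_smul, one_smul]
                abel
          _ ≤ (1/2) * ((1 - s) * ‖ζ‖) := k1
        have k3 : (1 - s) * ‖ζ‖ ≤ (t - s) * ‖ζ‖ :=
          mul_le_mul_of_nonneg_right (by linarith) (norm_nonneg _)
        have k4 : (1 - s) * ‖ζ‖ ≤ 0 * ‖ζ‖ := by
          rw [zero_mul]
          linarith
        have hs_eq : s = 1 := by
          have := (mul_le_mul_iff_of_pos_right hζpos).mp k4
          linarith
        have ht_eq : t = 1 := by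
          rw [hs_eq] at k2
          have k5 : (t - 1) * ‖ζ‖ ≤ 0 * ‖ζ‖ := by
            rw [zero_mul]
            linarith
          have := (mul_le_mul_iff_of_pos_right hζpos).mp k5
          linarith
        have : φ (g x) = φ z := by rw [hφw, ht_eq, one_smul, hζdef]
        have hwz : g x = z := φ.injOn hwsrc hzsrc this
        rw [hwz]
        exact Set.mem_insert _ _
    · rintro (rfl | rfl)
      · exact ⟨⟨w, ⟨0, 1, le_rfl, zero_le_one, by rw [zero_smul, one_smul, zero_add]⟩, hgz⟩,
          ⟨0, 1, Or.inl le_rfl, by rw [zero_smul, one_smul, zero_add]⟩⟩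
      · exact ⟨⟨w, ⟨1, 0, zero_le_one, le_rfl, by rw [one_smul, zero_smul, add_zero]⟩, hp⟩,
          ⟨1, 0, Or.inr le_rfl, by rw [one_smul, zero_smul, add_zero]⟩⟩


end Stmt17Aux

theorem stmt17_arcs_near_a_fixed_point
    (g : 𝕊² → 𝕊²) (hg : IsC1SphereDiffeo g) (p : 𝕊²) (hp : g p = p) :
    ∃ V : Set 𝕊², IsOpen V ∧ p ∈ V ∧
      (∀ z ∈ V, (z : EuclideanSpace ℝ (Fin 3)) ≠ -(p : EuclideanSpace ℝ (Fin 3))) ∧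
      ∀ z ∈ V, z ≠ p → g z = z →
        g '' minorArcS p z ∩ majorArcS p z = {z, p} := by
  obtain ⟨V, h1, h2, h3, h4⟩ := main_thm g hg.2.1 p hp
  exact ⟨V, h1, h2, h3, fun z hz hzp hgz => h4 z hz hzp hgz⟩

end
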